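/- Let V be a finite-dimensional real vector space, m ≥ 0, and T ∈ N_m(V) a normal tensor of order m. Then for any choice of three distinct argument positions of T (among its m+3 arguments), the alternation of T over those three arguments vanishes; that is, the sum over the six permutations σ of the three chosen positions of sgn(σ) times T with those three arguments permuted by σ is identically zero. -/

import Mathlib

noncomputable section

/-- `N`-linear forms on ℝ^d. -/
abbrev MForm (d N : ℕ) := MultilinearMap ℝ (fun _ : Fin N => (Fin d → ℝ)) ℝ

/-- standard basis vector of ℝ^d. -/
def bvec (d : ℕ) (i : Fin d) : Fin d → ℝ := Pi.single i 1

/-- Components of the standard symplectic form ω = Σ dx_i ∧ dy_i of ℝ^d (d even),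
with coordinates ordered as (x₁, y₁, x₂, y₂, …), so that the span of the first
2n coordinates is a symplectic subspace. -/
def stdJ (d : ℕ) (i j : Fin d) : ℝ :=
  if i.val + 1 = j.val ∧ Even i.val then 1
  else if j.val + 1 = i.val ∧ Even j.val then -1 else 0

/-- The standard symplectic form of ℝ^d as a bilinear function. -/
def stdSymp (d : ℕ) (u v : Fin d → ℝ) : ℝ := ∑ i, ∑ j, stdJ d i j * u i * v j

/-- Membership in the symplectic group Sp(d, ℝ): a linear endomorphism of ℝ^d
preserving the standard symplectic form (for d even this forces invertibility). -/
def IsSp (d : ℕ) (g : (Fin d → ℝ) →ₗ[ℝ] (Fin d → ℝ)) : Prop :=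
  ∀ u v, stdSymp d (g u) (g v) = stdSymp d u v

/-- The standard symplectic embedding ℝ^d ↪ ℝ^{d+2} (first d coordinates). -/
def inclL (d : ℕ) : (Fin d → ℝ) →ₗ[ℝ] (Fin (d + 2) → ℝ) where
  toFun u j := if h : j.val < d then u ⟨j.val, h⟩ else 0
  map_add' u v := by funext j; by_cases h : j.val < d <;> simp [h]
  map_smul' c u := by funext j; by_cases h : j.val < d <;> simp [h]

/-- The symplectic projection ℝ^{d+2} → ℝ^d (forget the last two coordinates). -/
def projL (d : ℕ) : (Fin (d + 2) → ℝ) →ₗ[ℝ] (Fin d → ℝ) :=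
  LinearMap.funLeft ℝ ℝ (Fin.castLE (by omega))

/-- Action of a linear endomorphism on multilinear forms (precomposition in every
slot); for g in Sp this realizes the Sp-action on multilinear forms. -/
def actF {d N : ℕ} (g : (Fin d → ℝ) →ₗ[ℝ] (Fin d → ℝ)) (T : MForm d N) : MForm d N :=
  T.compLinearMap (fun _ => g)

/-- Pullback of a multilinear form on ℝ^d to ℝ^{d+2} along the symplectic projection. -/
def pbF {d N : ℕ} (T : MForm d N) : MForm (d + 2) N :=
  T.compLinearMap (fun _ => projL d)

/-- Restriction of a multilinear form on ℝ^{d+2} to the subspace ℝ^d. -/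
def resF {d N : ℕ} (T : MForm (d + 2) N) : MForm d N :=
  T.compLinearMap (fun _ => inclL d)

/-- Algebraic symplectic curvature tensors: 4-linear forms symmetric in the first two
arguments, antisymmetric in the last two, satisfying the first Bianchi identity. -/
def IsCurv {d : ℕ} (T : MForm d 4) : Prop :=
  (∀ v : Fin 4 → (Fin d → ℝ), T (fun t => v (Equiv.swap (0 : Fin 4) 1 t)) = T v) ∧
  (∀ v : Fin 4 → (Fin d → ℝ), T (fun t => v (Equiv.swap (2 : Fin 4) 3 t)) = - T v) ∧
  (∀ v : Fin 4 → (Fin d → ℝ),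
    T v + T (fun t => v (![0, 2, 3, 1] t)) + T (fun t => v (![0, 3, 1, 2] t)) = 0)

/-- Curvature symmetries, in components. -/
def IsCurvC {d : ℕ} (Rc : Fin d → Fin d → Fin d → Fin d → ℝ) : Prop :=
  (∀ i j k l, Rc j i k l = Rc i j k l) ∧
  (∀ i j k l, Rc i j l k = - Rc i j k l) ∧
  (∀ x y z w, Rc x y z w + Rc x z w y + Rc x w y z = 0)

/-- Components of a 4-linear form in the standard basis. -/
def comp4 {d : ℕ} (T : MForm d 4) (i j k l : Fin d) : ℝ :=
  T (fun t => bvec d (![i, j, k, l] t))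

/-- Matrix entries (a, b) of the endomorphism R̂(e_c, e_e) determined by
ω(R̂(z,w)x, y) = R(x,y,z,w), raising the index with Ω'. -/
def rhatC {d : ℕ} (Ω' : Fin d → Fin d → ℝ) (Rc : Fin d → Fin d → Fin d → Fin d → ℝ)
    (c e a b : Fin d) : ℝ :=
  ∑ y, Rc b y c e * Ω' a y

/-- Matrix of the product R̂(x₁,x₂) ∘ R̂(x₃,x₄) ∘ ⋯ over consecutive pairs of a list
of basis indices. -/
def endProdC {d : ℕ} (Ω' : Fin d → Fin d → ℝ) (Rc : Fin d → Fin d → Fin d → Fin d → ℝ) :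
    List (Fin d) → Fin d → Fin d → ℝ
  | [], a, b => if a = b then 1 else 0
  | [_], a, b => if a = b then 1 else 0
  | c :: e :: rest, a, b => ∑ m, rhatC Ω' Rc c e a m * endProdC Ω' Rc rest m b

/-- Pre-Chern form of a list of degrees l = [q₁, …, q_s]: product of traces of the
R̂-products over consecutive blocks of 2q₁, 2q₂, … indices.  Its alternatization is
(up to a nonzero constant) the Chern form c_{q₁} ∧ ⋯ ∧ c_{q_s}. -/
def preChernC {d : ℕ} (Ω' : Fin d → Fin d → ℝ) (Rc : Fin d → Fin d → Fin d → Fin d → ℝ) :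
    List ℕ → List (Fin d) → ℝ
  | [], _ => 1
  | q :: rest, ts =>
      (∑ a, endProdC Ω' Rc (ts.take (2 * q)) a a) * preChernC Ω' Rc rest (ts.drop (2 * q))

/-- Components of the Chern 2k-form attached to a list of degrees with sum k:
the alternatization of the pre-Chern form. -/
def chernC {d : ℕ} (Ω' : Fin d → Fin d → ℝ) (Rc : Fin d → Fin d → Fin d → Fin d → ℝ)
    (k : ℕ) (l : List ℕ) (t : Fin (2 * k) → Fin d) : ℝ :=
  ∑ σ : Equiv.Perm (Fin (2 * k)),
    ((Equiv.Perm.sign σ : ℤ) : ℝ) * preChernC Ω' Rc l (List.ofFn (fun i => t (σ i)))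

/-- Components of the wedge power ω ∧ ⋯ ∧ ω (M/2 factors, an M-form):
full signed symmetrization of ω ⊗ ⋯ ⊗ ω. -/
def omegaAlt {d : ℕ} (Ω : Fin d → Fin d → ℝ) (M : ℕ) (t : Fin M → Fin d) : ℝ :=
  ∑ σ : Equiv.Perm (Fin M),
    ((Equiv.Perm.sign σ : ℤ) : ℝ) *
      ∏ i : Fin (M / 2),
        Ω (t (σ ⟨2 * i.val, by have := i.isLt; omega⟩))
          (t (σ ⟨2 * i.val + 1, by have := i.isLt; omega⟩))

/-- Components of the p-form ⟨ω^{∧(k+p/2)}, c_l(R)⟩: all 2k indices of the Chern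
2k-form are raised with Ω' and contracted into the first 2k indices of the
(2k+p)-form ω ∧ ⋯ ∧ ω. -/
def contrC {d : ℕ} (Ω Ω' : Fin d → Fin d → ℝ) (Rc : Fin d → Fin d → Fin d → Fin d → ℝ)
    (k p : ℕ) (l : List ℕ) (b : Fin p → Fin d) : ℝ :=
  ∑ c : Fin (2 * k) → Fin d, ∑ a : Fin (2 * k) → Fin d,
    chernC Ω' Rc k l c * (∏ i, Ω' (c i) (a i)) * omegaAlt Ω (2 * k + p) (Fin.append a b)

/-- Ricci tensor K_{ij} = ω^{km} R_{mikj}. -/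
def RicC {d : ℕ} (Ω' : Fin d → Fin d → ℝ) (Rc : Fin d → Fin d → Fin d → Fin d → ℝ)
    (i j : Fin d) : ℝ := ∑ k, ∑ m, Ω' k m * Rc m i k j

/-- K_i^j = ω^{jm} K_{im}. -/
def RicMix {d : ℕ} (Ω' : Fin d → Fin d → ℝ) (Rc : Fin d → Fin d → Fin d → Fin d → ℝ)
    (i j : Fin d) : ℝ := ∑ m, Ω' j m * RicC Ω' Rc i m

/-- R^l_{ijk} = ω^{lm} R_{mijk}. -/
def RupF {d : ℕ} (Ω' : Fin d → Fin d → ℝ) (Rc : Fin d → Fin d → Fin d → Fin d → ℝ)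
    (l i j k : Fin d) : ℝ := ∑ m, Ω' l m * Rc m i j k

/-- R_a^{bce} = ω^{bp} ω^{cq} ω^{er} R_{apqr}. -/
def RupL3 {d : ℕ} (Ω' : Fin d → Fin d → ℝ) (Rc : Fin d → Fin d → Fin d → Fin d → ℝ)
    (a b c e : Fin d) : ℝ :=
  ∑ p, ∑ q, ∑ r, Ω' b p * Ω' c q * Ω' e r * Rc a p q r

/-- R^i_{jb}{}^k = ω^{im} ω^{kc} R_{mjbc}. -/
def Rmid {d : ℕ} (Ω' : Fin d → Fin d → ℝ) (Rc : Fin d → Fin d → Fin d → Fin d → ℝ)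
    (i j b k : Fin d) : ℝ := ∑ m, ∑ c, Ω' i m * Ω' k c * Rc m j b c

/-- Components of 2K_i^jK_j^i ω_{ab} − R^l_{ijk}R_l^{ijk} ω_{ab}
+ 4K_i^jR^i_{jab} − 4R^j_{iak}R^i_{jb}{}^k. -/
def Texpr {d : ℕ} (Ω Ω' : Fin d → Fin d → ℝ) (Rc : Fin d → Fin d → Fin d → Fin d → ℝ)
    (a b : Fin d) : ℝ :=
  2 * (∑ i, ∑ j, RicMix Ω' Rc i j * RicMix Ω' Rc j i) * Ω a b
  - (∑ l, ∑ i, ∑ j, ∑ k, RupF Ω' Rc l i j k * RupL3 Ω' Rc l i j k) * Ω a b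
  + 4 * (∑ i, ∑ j, RicMix Ω' Rc i j * RupF Ω' Rc i j a b)
  - 4 * (∑ i, ∑ j, ∑ k, RupF Ω' Rc j i a k * Rmid Ω' Rc i j b k)

/-- The scalar R_{i₁}^{i₂j₁k₁} R_{i₂}^{i₁j₂k₂} (ω∧ω)_{j₁k₁j₂k₂}. -/
def Qscal {d : ℕ} (Ω Ω' : Fin d → Fin d → ℝ) (Rc : Fin d → Fin d → Fin d → Fin d → ℝ) : ℝ :=
  ∑ i₁, ∑ i₂, ∑ j₁, ∑ k₁, ∑ j₂, ∑ k₂,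
    RupL3 Ω' Rc i₁ i₂ j₁ k₁ * RupL3 Ω' Rc i₂ i₁ j₂ k₂ * omegaAlt Ω 4 ![j₁, k₁, j₂, k₂]

/-- Components R_{i₁}^{i₂j₁k₁} R_{i₂}^{i₁j₂k₂} (ω∧ω∧ω)_{j₁k₁j₂k₂ab}. -/
def T2expr {d : ℕ} (Ω Ω' : Fin d → Fin d → ℝ) (Rc : Fin d → Fin d → Fin d → Fin d → ℝ)
    (a b : Fin d) : ℝ :=
  ∑ i₁, ∑ i₂, ∑ j₁, ∑ k₁, ∑ j₂, ∑ k₂,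
    RupL3 Ω' Rc i₁ i₂ j₁ k₁ * RupL3 Ω' Rc i₂ i₁ j₂ k₂ *
      omegaAlt Ω 6 ![j₁, k₁, j₂, k₂, a, b]

/-- Reindexing (x_i, x_j, x_k, …) ↦ (x_j, x_k, x_i, …) on the first three slots. -/
def cyc3 (m : ℕ) : Fin (m + 3) → Fin (m + 3) := fun t =>
  if t.val = 0 then 1 else if t.val = 1 then 2 else if t.val = 2 then 0 else t

/-- Normal tensors of order m on V: (m+3)-linear forms that are symmetric in the 2nd
and 3rd arguments and in the last m arguments, whose symmetrization over the last m+2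
arguments vanishes, and (for m ≥ 1) such that
(x_i,x_j,x_k,a…) ↦ T(x_i,x_k,x_j,a…) − T(x_j,x_k,x_i,a…) is symmetric in x_k, x_{a₁}. -/
def IsNormal {V : Type*} [AddCommGroup V] [Module ℝ V] (m : ℕ)
    (T : MultilinearMap ℝ (fun _ : Fin (m + 3) => V) ℝ) : Prop :=
  (∀ v : Fin (m + 3) → V, T (fun t => v (Equiv.swap (1 : Fin (m + 3)) 2 t)) = T v) ∧
  (∀ v : Fin (m + 3) → V, ∀ σ : Equiv.Perm (Fin (m + 3)),
    σ 0 = 0 → σ 1 = 1 → σ 2 = 2 → T (fun t => v (σ t)) = T v) ∧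
  (∀ v : Fin (m + 3) → V,
    ∑ σ ∈ Finset.univ.filter (fun σ : Equiv.Perm (Fin (m + 3)) => σ 0 = 0),
      T (fun t => v (σ t)) = 0) ∧
  (1 ≤ m → ∀ v : Fin (m + 3) → V,
    (T (fun t => (fun u : Fin (m+3) => v (Equiv.swap (2 : Fin (m+3)) 3 u))
          (Equiv.swap (1 : Fin (m + 3)) 2 t)) -
     T (fun t => (fun u : Fin (m+3) => v (Equiv.swap (2 : Fin (m+3)) 3 u)) (cyc3 m t))) =
    (T (fun t => v (Equiv.swap (1 : Fin (m + 3)) 2 t)) - T (fun t => v (cyc3 m t))))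

/-- A tuple of arguments for a map on S^{d₁}N₁ ⊗ ⋯ ⊗ S^{d_r}N_r:
for each j, dd j tensors of order j+1 (arity j+4). -/
abbrev NTuple (e r : ℕ) (dd : Fin r → ℕ) :=
  ∀ j : Fin r, Fin (dd j) → MForm e (j.val + 1 + 3)

/-- All entries of the tuple are normal tensors. -/
def AllNormal {e r : ℕ} {dd : Fin r → ℕ} (A : NTuple e r dd) : Prop :=
  ∀ j i, IsNormal (j.val + 1) (A j i)

/-- Update a single entry of a tuple. -/
def updTup {e r : ℕ} {dd : Fin r → ℕ} (A : NTuple e r dd) (j : Fin r) (i : Fin (dd j))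
    (T : MForm e (j.val + 1 + 3)) : NTuple e r dd :=
  Function.update A j (Function.update (A j) i T)

/-- Sp-action on tuples of normal tensors. -/
def actTup {e r : ℕ} {dd : Fin r → ℕ} (g : (Fin e → ℝ) →ₗ[ℝ] (Fin e → ℝ))
    (A : NTuple e r dd) : NTuple e r dd := fun j i => actF g (A j i)

/-- Pullback of a tuple of normal tensors along the symplectic projection. -/
def pbTup {e r : ℕ} {dd : Fin r → ℕ} (A : NTuple e r dd) : NTuple (e + 2) r dd :=
  fun j i => pbF (A j i)

/-- Φ corresponds to an Sp-equivariant linear map S^{d₁}N₁ ⊗ ⋯ ⊗ S^{d_r}N_r → (p-forms):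
it is linear in each slot, symmetric within each group of slots, and Sp-equivariant
(all on tuples of normal tensors). -/
def IsGoodN {e r p : ℕ} {dd : Fin r → ℕ} (Φ : NTuple e r dd → MForm e p) : Prop :=
  (∀ A, AllNormal A → ∀ (j : Fin r) (i : Fin (dd j)) S T,
    IsNormal (j.val + 1) S → IsNormal (j.val + 1) T →
      Φ (updTup A j i (S + T)) = Φ (updTup A j i S) + Φ (updTup A j i T)) ∧
  (∀ A, AllNormal A → ∀ (j : Fin r) (i : Fin (dd j)) (c : ℝ) S,
    IsNormal (j.val + 1) S →
      Φ (updTup A j i (c • S)) = c • Φ (updTup A j i S)) ∧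
  (∀ A, AllNormal A → ∀ (j : Fin r) (σ : Equiv.Perm (Fin (dd j))),
      Φ (Function.update A j (fun i => A j (σ i))) = Φ A) ∧
  (∀ g, IsSp e g → ∀ A, AllNormal A → Φ (actTup g A) = actF g (Φ A))

/-- Φ corresponds to an Sp-equivariant linear map S^k𝓡 → (p-forms): linear in each
slot, symmetric, and Sp-equivariant (all on tuples of curvature tensors). -/
def IsGoodC {e k p : ℕ} (Φ : (Fin k → MForm e 4) → MForm e p) : Prop :=
  (∀ A : Fin k → MForm e 4, (∀ i, IsCurv (A i)) → ∀ i S T, IsCurv S → IsCurv T →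
      Φ (Function.update A i (S + T)) =
        Φ (Function.update A i S) + Φ (Function.update A i T)) ∧
  (∀ A : Fin k → MForm e 4, (∀ i, IsCurv (A i)) → ∀ i (c : ℝ) S, IsCurv S →
      Φ (Function.update A i (c • S)) = c • Φ (Function.update A i S)) ∧
  (∀ A : Fin k → MForm e 4, (∀ i, IsCurv (A i)) → ∀ σ : Equiv.Perm (Fin k),
      Φ (fun i => A (σ i)) = Φ A) ∧
  (∀ g, IsSp e g → ∀ A : Fin k → MForm e 4, (∀ i, IsCurv (A i)) →
      Φ (fun i => actF g (A i)) = actF g (Φ A))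

/-- B corresponds to an Sp-invariant linear form on S²𝓡: it is a symmetric bilinear
Sp-invariant function of two curvature tensors. -/
def IsGoodBil {d : ℕ} (B : MForm d 4 → MForm d 4 → ℝ) : Prop :=
  (∀ R S T, IsCurv R → IsCurv S → IsCurv T → B (S + T) R = B S R + B T R) ∧
  (∀ R S (c : ℝ), IsCurv R → IsCurv S → B (c • S) R = c * B S R) ∧
  (∀ R S, IsCurv R → IsCurv S → B R S = B S R) ∧
  (∀ g, IsSp d g → ∀ R S, IsCurv R → IsCurv S → B (actF g R) (actF g S) = B R S)

/-- Φ corresponds to an Sp-equivariant linear map S²𝓡 → (bilinear forms): symmetric,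
bilinear and Sp-equivariant in two curvature arguments. -/
def IsGoodBil2 {d : ℕ} (Φ : MForm d 4 → MForm d 4 → MForm d 2) : Prop :=
  (∀ R S T, IsCurv R → IsCurv S → IsCurv T → Φ (S + T) R = Φ S R + Φ T R) ∧
  (∀ R S (c : ℝ), IsCurv R → IsCurv S → Φ (c • S) R = c • Φ S R) ∧
  (∀ R S, IsCurv R → IsCurv S → Φ R S = Φ S R) ∧
  (∀ g, IsSp d g → ∀ R S, IsCurv R → IsCurv S →
    Φ (actF g R) (actF g S) = actF g (Φ R S))


section AuxStatement4

open Equiv Finset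

variable {n : ℕ} {V : Type*} [AddCommGroup V] [Module ℝ V]

private lemma filterS_eq (a b c : Fin n) (hab : a ≠ b) (hac : a ≠ c) (hbc : b ≠ c) :
    Finset.univ.filter
      (fun σ : Equiv.Perm (Fin n) => ∀ t : Fin n, t ≠ a → t ≠ b → t ≠ c → σ t = t) =
    {1, Equiv.swap a b, Equiv.swap a c, Equiv.swap b c,
      Equiv.swap a b * Equiv.swap b c, Equiv.swap a c * Equiv.swap b c} := by
  have sab_a : (Equiv.swap a b) a = b := Equiv.swap_apply_left a b
  have sab_b : (Equiv.swap a b) b = a := Equiv.swap_apply_right a b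
  have sab_c : (Equiv.swap a b) c = c :=
    Equiv.swap_apply_of_ne_of_ne (Ne.symm hac) (Ne.symm hbc)
  have sac_a : (Equiv.swap a c) a = c := Equiv.swap_apply_left a c
  have sac_b : (Equiv.swap a c) b = b :=
    Equiv.swap_apply_of_ne_of_ne (Ne.symm hab) hbc
  have sac_c : (Equiv.swap a c) c = a := Equiv.swap_apply_right a c
  have sbc_a : (Equiv.swap b c) a = a := Equiv.swap_apply_of_ne_of_ne hab hac
  have sbc_b : (Equiv.swap b c) b = c := Equiv.swap_apply_left b c
  have sbc_c : (Equiv.swap b c) c = b := Equiv.swap_apply_right b c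
  have vca : (Equiv.swap a b * Equiv.swap b c) a = b := by
    simp only [Equiv.Perm.mul_apply, sbc_a, sab_a]
  have vcb : (Equiv.swap a b * Equiv.swap b c) b = c := by
    simp only [Equiv.Perm.mul_apply, sbc_b, sab_c]
  have vcc : (Equiv.swap a b * Equiv.swap b c) c = a := by
    simp only [Equiv.Perm.mul_apply, sbc_c, sab_b]
  have wca : (Equiv.swap a c * Equiv.swap b c) a = c := by
    simp only [Equiv.Perm.mul_apply, sbc_a, sac_a]
  have wcb : (Equiv.swap a c * Equiv.swap b c) b = a := by
    simp only [Equiv.Perm.mul_apply, sbc_b, sac_c]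
  have wcc : (Equiv.swap a c * Equiv.swap b c) c = b := by
    simp only [Equiv.Perm.mul_apply, sbc_c, sac_b]
  ext σ
  simp only [Finset.mem_filter, Finset.mem_univ, true_and, Finset.mem_insert,
    Finset.mem_singleton]
  constructor
  · intro hσ
    have mem : ∀ x : Fin n, x = a ∨ x = b ∨ x = c → σ x = a ∨ σ x = b ∨ σ x = c := by
      intro x hx
      by_cases h1 : σ x = a; · tauto
      by_cases h2 : σ x = b; · tauto
      by_cases h3 : σ x = c; · tauto
      have := σ.injective (hσ (σ x) h1 h2 h3)
      rw [this]; exact hx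
    have ext6 : ∀ τ : Equiv.Perm (Fin n),
        (∀ t : Fin n, t ≠ a → t ≠ b → t ≠ c → τ t = t) →
        σ a = τ a → σ b = τ b → σ c = τ c → σ = τ := by
      intro τ hτ h1 h2 h3
      apply Equiv.ext; intro t
      by_cases ta : t = a; · subst ta; exact h1
      by_cases tb : t = b; · subst tb; exact h2
      by_cases tc : t = c; · subst tc; exact h3
      rw [hσ t ta tb tc, hτ t ta tb tc]
    have fix1 : ∀ t : Fin n, t ≠ a → t ≠ b → t ≠ c → (1 : Equiv.Perm (Fin n)) t = t := by
      intros; rfl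
    have fixab : ∀ t : Fin n, t ≠ a → t ≠ b → t ≠ c → (Equiv.swap a b) t = t := by
      intro t ta tb _; exact Equiv.swap_apply_of_ne_of_ne ta tb
    have fixac : ∀ t : Fin n, t ≠ a → t ≠ b → t ≠ c → (Equiv.swap a c) t = t := by
      intro t ta _ tc; exact Equiv.swap_apply_of_ne_of_ne ta tc
    have fixbc : ∀ t : Fin n, t ≠ a → t ≠ b → t ≠ c → (Equiv.swap b c) t = t := by
      intro t _ tb tc; exact Equiv.swap_apply_of_ne_of_ne tb tc
    have fixc1 : ∀ t : Fin n, t ≠ a → t ≠ b → t ≠ c →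
        (Equiv.swap a b * Equiv.swap b c) t = t := by
      intro t ta tb tc
      simp only [Equiv.Perm.mul_apply]
      rw [Equiv.swap_apply_of_ne_of_ne tb tc, Equiv.swap_apply_of_ne_of_ne ta tb]
    have fixc2 : ∀ t : Fin n, t ≠ a → t ≠ b → t ≠ c →
        (Equiv.swap a c * Equiv.swap b c) t = t := by
      intro t ta tb tc
      simp only [Equiv.Perm.mul_apply]
      rw [Equiv.swap_apply_of_ne_of_ne tb tc, Equiv.swap_apply_of_ne_of_ne ta tc]
    rcases mem a (by tauto) with h1 | h1 | h1 <;>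
      rcases mem b (by tauto) with h2 | h2 | h2 <;>
        rcases mem c (by tauto) with h3 | h3 | h3 <;>
      first
        | exact absurd (σ.injective (h1.trans h2.symm)) hab
        | exact absurd (σ.injective (h1.trans h3.symm)) hac
        | exact absurd (σ.injective (h2.trans h3.symm)) hbc
        | exact Or.inl (ext6 1 fix1 h1 h2 h3)
        | exact Or.inr (Or.inl (ext6 _ fixab (h1.trans sab_a.symm)
            (h2.trans sab_b.symm) (h3.trans sab_c.symm)))
        | exact Or.inr (Or.inr (Or.inl (ext6 _ fixac (h1.trans sac_a.symm)
            (h2.trans sac_b.symm) (h3.trans sac_c.symm))))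
        | exact Or.inr (Or.inr (Or.inr (Or.inl (ext6 _ fixbc (h1.trans sbc_a.symm)
            (h2.trans sbc_b.symm) (h3.trans sbc_c.symm)))))
        | exact Or.inr (Or.inr (Or.inr (Or.inr (Or.inl (ext6 _ fixc1 (h1.trans vca.symm)
            (h2.trans vcb.symm) (h3.trans vcc.symm))))))
        | exact Or.inr (Or.inr (Or.inr (Or.inr (Or.inr (ext6 _ fixc2 (h1.trans wca.symm)
            (h2.trans wcb.symm) (h3.trans wcc.symm))))))
  · rintro (rfl | rfl | rfl | rfl | rfl | rfl) <;> intro t ta tb tc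
    · rfl
    · exact Equiv.swap_apply_of_ne_of_ne ta tb
    · exact Equiv.swap_apply_of_ne_of_ne ta tc
    · exact Equiv.swap_apply_of_ne_of_ne tb tc
    · simp only [Equiv.Perm.mul_apply]
      rw [Equiv.swap_apply_of_ne_of_ne tb tc, Equiv.swap_apply_of_ne_of_ne ta tb]
    · simp only [Equiv.Perm.mul_apply]
      rw [Equiv.swap_apply_of_ne_of_ne tb tc, Equiv.swap_apply_of_ne_of_ne ta tc]

private lemma perm_ne' {σ τ : Equiv.Perm (Fin n)} (x : Fin n) (h : σ x ≠ τ x) : σ ≠ τ :=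
  fun he => h (by rw [he])

private lemma alt_expand (a b c : Fin n) (hab : a ≠ b) (hac : a ≠ c) (hbc : b ≠ c)
    (f : Equiv.Perm (Fin n) → ℝ) :
    ∑ σ ∈ Finset.univ.filter
      (fun σ : Equiv.Perm (Fin n) => ∀ t : Fin n, t ≠ a → t ≠ b → t ≠ c → σ t = t), f σ
    = f 1 + f (Equiv.swap a b) + f (Equiv.swap a c) + f (Equiv.swap b c)
      + f (Equiv.swap a b * Equiv.swap b c) + f (Equiv.swap a c * Equiv.swap b c) := by
  have sab_a : (Equiv.swap a b) a = b := Equiv.swap_apply_left a b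
  have sab_b : (Equiv.swap a b) b = a := Equiv.swap_apply_right a b
  have sac_a : (Equiv.swap a c) a = c := Equiv.swap_apply_left a c
  have sac_b : (Equiv.swap a c) b = b :=
    Equiv.swap_apply_of_ne_of_ne (Ne.symm hab) hbc
  have sbc_a : (Equiv.swap b c) a = a := Equiv.swap_apply_of_ne_of_ne hab hac
  have sbc_b : (Equiv.swap b c) b = c := Equiv.swap_apply_left b c
  have vca : (Equiv.swap a b * Equiv.swap b c) a = b := by
    simp only [Equiv.Perm.mul_apply, sbc_a, sab_a]
  have vcb : (Equiv.swap a b * Equiv.swap b c) b = c := by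
    simp only [Equiv.Perm.mul_apply, sbc_b]
    exact Equiv.swap_apply_of_ne_of_ne (Ne.symm hac) (Ne.symm hbc)
  have wca : (Equiv.swap a c * Equiv.swap b c) a = c := by
    simp only [Equiv.Perm.mul_apply, sbc_a, sac_a]
  have wcb : (Equiv.swap a c * Equiv.swap b c) b = a := by
    simp only [Equiv.Perm.mul_apply, sbc_b, Equiv.swap_apply_right]
  rw [filterS_eq a b c hab hac hbc]
  rw [Finset.sum_insert, Finset.sum_insert, Finset.sum_insert, Finset.sum_insert,
    Finset.sum_insert, Finset.sum_singleton]
  · ring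
  · -- swap a b * swap b c ∉ {swap a c * swap b c}
    simp only [Finset.mem_singleton]
    exact perm_ne' a (by rw [vca, wca]; exact hbc)
  · simp only [Finset.mem_insert, Finset.mem_singleton]
    push_neg
    refine ⟨perm_ne' a (by rw [sbc_a, vca]; exact hab), perm_ne' a (by rw [sbc_a, wca]; exact hac)⟩
  · simp only [Finset.mem_insert, Finset.mem_singleton]
    push_neg
    refine ⟨perm_ne' a (by rw [sac_a, sbc_a]; exact Ne.symm hac),
      perm_ne' a (by rw [sac_a, vca]; exact Ne.symm hbc),
      perm_ne' b (by rw [sac_b, wcb]; exact Ne.symm hab)⟩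
  · simp only [Finset.mem_insert, Finset.mem_singleton]
    push_neg
    refine ⟨perm_ne' a (by rw [sab_a, sac_a]; exact hbc),
      perm_ne' a (by rw [sab_a, sbc_a]; exact Ne.symm hab),
      perm_ne' b (by rw [sab_b, vcb]; exact hac),
      perm_ne' a (by rw [sab_a, wca]; exact hbc)⟩
  · simp only [Finset.mem_insert, Finset.mem_singleton]
    push_neg
    refine ⟨perm_ne' a (by rw [Equiv.Perm.one_apply, sab_a]; exact hab),
      perm_ne' a (by rw [Equiv.Perm.one_apply, sac_a]; exact hac),
      perm_ne' b (by rw [Equiv.Perm.one_apply, sbc_b]; exact hbc),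
      perm_ne' a (by rw [Equiv.Perm.one_apply, vca]; exact hab),
      perm_ne' a (by rw [Equiv.Perm.one_apply, wca]; exact hac)⟩

private lemma filter_reorder (a b c a' b' c' : Fin n)
    (h : ∀ t : Fin n, (t = a ∨ t = b ∨ t = c) ↔ (t = a' ∨ t = b' ∨ t = c')) :
    Finset.univ.filter
      (fun σ : Equiv.Perm (Fin n) => ∀ t : Fin n, t ≠ a → t ≠ b → t ≠ c → σ t = t) =
    Finset.univ.filter
      (fun σ : Equiv.Perm (Fin n) => ∀ t : Fin n, t ≠ a' → t ≠ b' → t ≠ c' → σ t = t) := by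
  refine Finset.filter_congr fun σ _ => ?_
  constructor <;> intro H t h1 h2 h3 <;> refine H t ?_ ?_ ?_ <;>
    · have ht := h t; tauto

private lemma alt_zero_of_pair (T : MultilinearMap ℝ (fun _ : Fin n => V) ℝ)
    (a b c : Fin n) (hab : a ≠ b) (hac : a ≠ c) (hbc : b ≠ c) (v : Fin n → V)
    (hsw : ∀ w : Fin n → V, T (fun t => w (Equiv.swap b c t)) = T w) :
    ∑ σ ∈ Finset.univ.filter
        (fun σ : Equiv.Perm (Fin n) =>
          ∀ t : Fin n, t ≠ a → t ≠ b → t ≠ c → σ t = t),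
      ((Equiv.Perm.sign σ : ℤ) : ℝ) * T (fun t => v (σ t)) = 0 := by
  rw [alt_expand a b c hab hac hbc]
  have h1 := hsw v
  have h2 := hsw (fun s => v (Equiv.swap a b s))
  have h3 := hsw (fun s => v (Equiv.swap a c s))
  simp only [Equiv.Perm.mul_apply] at *
  simp only [Equiv.Perm.sign_one, Equiv.Perm.sign_swap hab, Equiv.Perm.sign_swap hac,
    Equiv.Perm.sign_swap hbc, Equiv.Perm.sign_mul, Equiv.Perm.one_apply,
    Units.val_mul, Units.val_neg, Units.val_one, Int.cast_mul, Int.cast_neg,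
    Int.cast_one, one_mul, neg_mul, neg_neg, mul_one]
  linarith [h1, h2, h3]

private lemma alt_conj (T : MultilinearMap ℝ (fun _ : Fin n => V) ℝ)
    (a b c a' b' c' : Fin n) (τ : Equiv.Perm (Fin n))
    (ha : τ a' = a) (hb : τ b' = b) (hc : τ c' = c)
    (hτ : ∀ w : Fin n → V, T (fun t => w (τ t)) = T w) (v : Fin n → V) :
    ∑ σ ∈ Finset.univ.filter
        (fun σ : Equiv.Perm (Fin n) =>
          ∀ t : Fin n, t ≠ a → t ≠ b → t ≠ c → σ t = t),
      ((Equiv.Perm.sign σ : ℤ) : ℝ) * T (fun t => v (σ t))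
    = ∑ σ ∈ Finset.univ.filter
        (fun σ : Equiv.Perm (Fin n) =>
          ∀ t : Fin n, t ≠ a' → t ≠ b' → t ≠ c' → σ t = t),
      ((Equiv.Perm.sign σ : ℤ) : ℝ) * T (fun t => v (τ (σ t))) := by
  have key : ∀ (u w : ℤˣ), u * w * u = w := fun u w => by
    rw [mul_comm u w, mul_assoc, Int.units_mul_self, mul_one]
  refine Finset.sum_nbij' (fun σ => τ⁻¹ * σ * τ) (fun σ => τ * σ * τ⁻¹) ?_ ?_ ?_ ?_ ?_
  · intro σ hσ
    simp only [Finset.mem_filter, Finset.mem_univ, true_and] at hσ ⊢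
    intro t h1 h2 h3
    have ht1 : τ t ≠ a := fun h => h1 (τ.injective (h.trans ha.symm) : t = a')
    have ht2 : τ t ≠ b := fun h => h2 (τ.injective (h.trans hb.symm) : t = b')
    have ht3 : τ t ≠ c := fun h => h3 (τ.injective (h.trans hc.symm) : t = c')
    simp only [Equiv.Perm.mul_apply, hσ (τ t) ht1 ht2 ht3, Equiv.Perm.coe_inv, Equiv.symm_apply_apply]
  · intro σ hσ
    simp only [Finset.mem_filter, Finset.mem_univ, true_and] at hσ ⊢
    intro t h1 h2 h3
    have ht1 : τ⁻¹ t ≠ a' := fun h => h1 (by rw [← ha, ← h, Equiv.Perm.coe_inv, Equiv.apply_symm_apply])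
    have ht2 : τ⁻¹ t ≠ b' := fun h => h2 (by rw [← hb, ← h, Equiv.Perm.coe_inv, Equiv.apply_symm_apply])
    have ht3 : τ⁻¹ t ≠ c' := fun h => h3 (by rw [← hc, ← h, Equiv.Perm.coe_inv, Equiv.apply_symm_apply])
    simp only [Equiv.Perm.mul_apply, hσ (τ⁻¹ t) ht1 ht2 ht3]; simp only [Equiv.Perm.coe_inv, Equiv.apply_symm_apply]
  · intro σ _; group
  · intro σ _; group
  · intro σ _
    have hsgn : Equiv.Perm.sign (τ⁻¹ * σ * τ) = Equiv.Perm.sign σ := by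
      rw [Equiv.Perm.sign_mul, Equiv.Perm.sign_mul, Equiv.Perm.sign_inv]
      exact key _ _
    rw [hsgn]
    congr 1
    have e1 : (fun t => v (τ ((τ⁻¹ * σ * τ) t))) = fun t => v (σ (τ t)) := by
      funext t
      simp only [Equiv.Perm.mul_apply, Equiv.Perm.coe_inv, Equiv.apply_symm_apply]
    rw [e1]
    exact (hτ (fun s => v (σ s))).symm

set_option maxHeartbeats 1000000 in
private lemma F1 (m : ℕ) (hm : 1 ≤ m) (v : Fin (m+3) → V) :
    (fun t => v ((Equiv.swap (1 : Fin (m+3)) 2) ((Equiv.swap (2 : Fin (m+3)) 3) ((Equiv.swap (1 : Fin (m+3)) 2) t)))) = fun t => v ((Equiv.swap (1 : Fin (m+3)) 3) t) := by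
  have h3v : ((3 : Fin (m + 3)) : ℕ) = 3 := by
    rw [Fin.coe_ofNat_eq_mod]; exact Nat.mod_eq_of_lt (by omega)
  funext t; congr 1
  try simp only [Equiv.Perm.mul_apply, Equiv.Perm.one_apply]
  by_cases c0 : t = 0
  · subst c0; simp [Equiv.swap_apply_def, cyc3, Fin.ext_iff, h3v, Nat.mod_eq_of_lt (show 2 < m + 3 by omega), Nat.mod_eq_of_lt (show 3 < m + 3 by omega)]
  by_cases c1 : t = 1
  · subst c1; simp [Equiv.swap_apply_def, cyc3, Fin.ext_iff, h3v, Nat.mod_eq_of_lt (show 2 < m + 3 by omega), Nat.mod_eq_of_lt (show 3 < m + 3 by omega)]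
  by_cases c2 : t = 2
  · subst c2; simp [Equiv.swap_apply_def, cyc3, Fin.ext_iff, h3v, Nat.mod_eq_of_lt (show 2 < m + 3 by omega), Nat.mod_eq_of_lt (show 3 < m + 3 by omega)]
  by_cases c3 : t = 3
  · subst c3; simp [Equiv.swap_apply_def, cyc3, Fin.ext_iff, h3v, Nat.mod_eq_of_lt (show 2 < m + 3 by omega), Nat.mod_eq_of_lt (show 3 < m + 3 by omega)]
  · have w0 := c0; have w1 := c1; have w2 := c2; have w3 := c3
    simp only [Fin.ext_iff, Fin.val_zero, Fin.val_one, Fin.val_two, h3v] at w0 w1 w2 w3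
    simp [Equiv.swap_apply_def, cyc3, c0, c1, c2, c3, w0, w1, w2, w3, Nat.mod_eq_of_lt (show 2 < m + 3 by omega), Nat.mod_eq_of_lt (show 3 < m + 3 by omega)]

set_option maxHeartbeats 1000000 in
private lemma F2 (m : ℕ) (hm : 1 ≤ m) (v : Fin (m+3) → V) :
    (fun t => v ((Equiv.swap (1 : Fin (m+3)) 2) ((Equiv.swap (2 : Fin (m+3)) 3) (cyc3 m t)))) = fun t => v ((Equiv.swap (0 : Fin (m+3)) 2 * Equiv.swap (1 : Fin (m+3)) 3) t) := by
  have h3v : ((3 : Fin (m + 3)) : ℕ) = 3 := by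
    rw [Fin.coe_ofNat_eq_mod]; exact Nat.mod_eq_of_lt (by omega)
  funext t; congr 1
  try simp only [Equiv.Perm.mul_apply, Equiv.Perm.one_apply]
  by_cases c0 : t = 0
  · subst c0; simp [Equiv.swap_apply_def, cyc3, Fin.ext_iff, h3v, Nat.mod_eq_of_lt (show 2 < m + 3 by omega), Nat.mod_eq_of_lt (show 3 < m + 3 by omega)]
  by_cases c1 : t = 1
  · subst c1; simp [Equiv.swap_apply_def, cyc3, Fin.ext_iff, h3v, Nat.mod_eq_of_lt (show 2 < m + 3 by omega), Nat.mod_eq_of_lt (show 3 < m + 3 by omega)]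
  by_cases c2 : t = 2
  · subst c2; simp [Equiv.swap_apply_def, cyc3, Fin.ext_iff, h3v, Nat.mod_eq_of_lt (show 2 < m + 3 by omega), Nat.mod_eq_of_lt (show 3 < m + 3 by omega)]
  by_cases c3 : t = 3
  · subst c3; simp [Equiv.swap_apply_def, cyc3, Fin.ext_iff, h3v, Nat.mod_eq_of_lt (show 2 < m + 3 by omega), Nat.mod_eq_of_lt (show 3 < m + 3 by omega)]
  · have w0 := c0; have w1 := c1; have w2 := c2; have w3 := c3
    simp only [Fin.ext_iff, Fin.val_zero, Fin.val_one, Fin.val_two, h3v] at w0 w1 w2 w3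
    simp [Equiv.swap_apply_def, cyc3, c0, c1, c2, c3, w0, w1, w2, w3, Nat.mod_eq_of_lt (show 2 < m + 3 by omega), Nat.mod_eq_of_lt (show 3 < m + 3 by omega)]

set_option maxHeartbeats 1000000 in
private lemma F3 (m : ℕ) (hm : 1 ≤ m) (v : Fin (m+3) → V) :
    (fun t => v ((Equiv.swap (1 : Fin (m+3)) 2) ((Equiv.swap (1 : Fin (m+3)) 2) t))) = fun t => v ((1 : Equiv.Perm (Fin (m+3))) t) := by
  have h3v : ((3 : Fin (m + 3)) : ℕ) = 3 := by
    rw [Fin.coe_ofNat_eq_mod]; exact Nat.mod_eq_of_lt (by omega)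
  funext t; congr 1
  try simp only [Equiv.Perm.mul_apply, Equiv.Perm.one_apply]
  by_cases c0 : t = 0
  · subst c0; simp [Equiv.swap_apply_def, cyc3, Fin.ext_iff, h3v, Nat.mod_eq_of_lt (show 2 < m + 3 by omega), Nat.mod_eq_of_lt (show 3 < m + 3 by omega)]
  by_cases c1 : t = 1
  · subst c1; simp [Equiv.swap_apply_def, cyc3, Fin.ext_iff, h3v, Nat.mod_eq_of_lt (show 2 < m + 3 by omega), Nat.mod_eq_of_lt (show 3 < m + 3 by omega)]
  by_cases c2 : t = 2
  · subst c2; simp [Equiv.swap_apply_def, cyc3, Fin.ext_iff, h3v, Nat.mod_eq_of_lt (show 2 < m + 3 by omega), Nat.mod_eq_of_lt (show 3 < m + 3 by omega)]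
  by_cases c3 : t = 3
  · subst c3; simp [Equiv.swap_apply_def, cyc3, Fin.ext_iff, h3v, Nat.mod_eq_of_lt (show 2 < m + 3 by omega), Nat.mod_eq_of_lt (show 3 < m + 3 by omega)]
  · have w0 := c0; have w1 := c1; have w2 := c2; have w3 := c3
    simp only [Fin.ext_iff, Fin.val_zero, Fin.val_one, Fin.val_two, h3v] at w0 w1 w2 w3
    simp [Equiv.swap_apply_def, cyc3, c0, c1, c2, c3, w0, w1, w2, w3, Nat.mod_eq_of_lt (show 2 < m + 3 by omega), Nat.mod_eq_of_lt (show 3 < m + 3 by omega)]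

set_option maxHeartbeats 1000000 in
private lemma F4 (m : ℕ) (hm : 1 ≤ m) (v : Fin (m+3) → V) :
    (fun t => v ((Equiv.swap (1 : Fin (m+3)) 2) (cyc3 m t))) = fun t => v ((Equiv.swap (0 : Fin (m+3)) 2) t) := by
  have h3v : ((3 : Fin (m + 3)) : ℕ) = 3 := by
    rw [Fin.coe_ofNat_eq_mod]; exact Nat.mod_eq_of_lt (by omega)
  funext t; congr 1
  try simp only [Equiv.Perm.mul_apply, Equiv.Perm.one_apply]
  by_cases c0 : t = 0
  · subst c0; simp [Equiv.swap_apply_def, cyc3, Fin.ext_iff, h3v, Nat.mod_eq_of_lt (show 2 < m + 3 by omega), Nat.mod_eq_of_lt (show 3 < m + 3 by omega)]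
  by_cases c1 : t = 1
  · subst c1; simp [Equiv.swap_apply_def, cyc3, Fin.ext_iff, h3v, Nat.mod_eq_of_lt (show 2 < m + 3 by omega), Nat.mod_eq_of_lt (show 3 < m + 3 by omega)]
  by_cases c2 : t = 2
  · subst c2; simp [Equiv.swap_apply_def, cyc3, Fin.ext_iff, h3v, Nat.mod_eq_of_lt (show 2 < m + 3 by omega), Nat.mod_eq_of_lt (show 3 < m + 3 by omega)]
  by_cases c3 : t = 3
  · subst c3; simp [Equiv.swap_apply_def, cyc3, Fin.ext_iff, h3v, Nat.mod_eq_of_lt (show 2 < m + 3 by omega), Nat.mod_eq_of_lt (show 3 < m + 3 by omega)]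
  · have w0 := c0; have w1 := c1; have w2 := c2; have w3 := c3
    simp only [Fin.ext_iff, Fin.val_zero, Fin.val_one, Fin.val_two, h3v] at w0 w1 w2 w3
    simp [Equiv.swap_apply_def, cyc3, c0, c1, c2, c3, w0, w1, w2, w3, Nat.mod_eq_of_lt (show 2 < m + 3 by omega), Nat.mod_eq_of_lt (show 3 < m + 3 by omega)]

set_option maxHeartbeats 1000000 in
private lemma F5 (m : ℕ) (hm : 1 ≤ m) (v : Fin (m+3) → V) :
    (fun t => v (cyc3 m ((Equiv.swap (2 : Fin (m+3)) 3) ((Equiv.swap (1 : Fin (m+3)) 2) t)))) = fun t => v ((Equiv.swap (0 : Fin (m+3)) 1 * Equiv.swap (1 : Fin (m+3)) 3) t) := by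
  have h3v : ((3 : Fin (m + 3)) : ℕ) = 3 := by
    rw [Fin.coe_ofNat_eq_mod]; exact Nat.mod_eq_of_lt (by omega)
  funext t; congr 1
  try simp only [Equiv.Perm.mul_apply, Equiv.Perm.one_apply]
  by_cases c0 : t = 0
  · subst c0; simp [Equiv.swap_apply_def, cyc3, Fin.ext_iff, h3v, Nat.mod_eq_of_lt (show 2 < m + 3 by omega), Nat.mod_eq_of_lt (show 3 < m + 3 by omega)]
  by_cases c1 : t = 1
  · subst c1; simp [Equiv.swap_apply_def, cyc3, Fin.ext_iff, h3v, Nat.mod_eq_of_lt (show 2 < m + 3 by omega), Nat.mod_eq_of_lt (show 3 < m + 3 by omega)]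
  by_cases c2 : t = 2
  · subst c2; simp [Equiv.swap_apply_def, cyc3, Fin.ext_iff, h3v, Nat.mod_eq_of_lt (show 2 < m + 3 by omega), Nat.mod_eq_of_lt (show 3 < m + 3 by omega)]
  by_cases c3 : t = 3
  · subst c3; simp [Equiv.swap_apply_def, cyc3, Fin.ext_iff, h3v, Nat.mod_eq_of_lt (show 2 < m + 3 by omega), Nat.mod_eq_of_lt (show 3 < m + 3 by omega)]
  · have w0 := c0; have w1 := c1; have w2 := c2; have w3 := c3
    simp only [Fin.ext_iff, Fin.val_zero, Fin.val_one, Fin.val_two, h3v] at w0 w1 w2 w3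
    simp [Equiv.swap_apply_def, cyc3, c0, c1, c2, c3, w0, w1, w2, w3, Nat.mod_eq_of_lt (show 2 < m + 3 by omega), Nat.mod_eq_of_lt (show 3 < m + 3 by omega)]

set_option maxHeartbeats 1000000 in
private lemma F6 (m : ℕ) (hm : 1 ≤ m) (v : Fin (m+3) → V) :
    (fun t => v (cyc3 m ((Equiv.swap (2 : Fin (m+3)) 3) (cyc3 m t)))) = fun t => v ((Equiv.swap (0 : Fin (m+3)) 1 * Equiv.swap (0 : Fin (m+3)) 2 * Equiv.swap (1 : Fin (m+3)) 3) t) := by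
  have h3v : ((3 : Fin (m + 3)) : ℕ) = 3 := by
    rw [Fin.coe_ofNat_eq_mod]; exact Nat.mod_eq_of_lt (by omega)
  funext t; congr 1
  try simp only [Equiv.Perm.mul_apply, Equiv.Perm.one_apply]
  by_cases c0 : t = 0
  · subst c0; simp [Equiv.swap_apply_def, cyc3, Fin.ext_iff, h3v, Nat.mod_eq_of_lt (show 2 < m + 3 by omega), Nat.mod_eq_of_lt (show 3 < m + 3 by omega)]
  by_cases c1 : t = 1
  · subst c1; simp [Equiv.swap_apply_def, cyc3, Fin.ext_iff, h3v, Nat.mod_eq_of_lt (show 2 < m + 3 by omega), Nat.mod_eq_of_lt (show 3 < m + 3 by omega)]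
  by_cases c2 : t = 2
  · subst c2; simp [Equiv.swap_apply_def, cyc3, Fin.ext_iff, h3v, Nat.mod_eq_of_lt (show 2 < m + 3 by omega), Nat.mod_eq_of_lt (show 3 < m + 3 by omega)]
  by_cases c3 : t = 3
  · subst c3; simp [Equiv.swap_apply_def, cyc3, Fin.ext_iff, h3v, Nat.mod_eq_of_lt (show 2 < m + 3 by omega), Nat.mod_eq_of_lt (show 3 < m + 3 by omega)]
  · have w0 := c0; have w1 := c1; have w2 := c2; have w3 := c3
    simp only [Fin.ext_iff, Fin.val_zero, Fin.val_one, Fin.val_two, h3v] at w0 w1 w2 w3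
    simp [Equiv.swap_apply_def, cyc3, c0, c1, c2, c3, w0, w1, w2, w3, Nat.mod_eq_of_lt (show 2 < m + 3 by omega), Nat.mod_eq_of_lt (show 3 < m + 3 by omega)]

set_option maxHeartbeats 1000000 in
private lemma F7 (m : ℕ) (hm : 1 ≤ m) (v : Fin (m+3) → V) :
    (fun t => v (cyc3 m ((Equiv.swap (1 : Fin (m+3)) 2) t))) = fun t => v ((Equiv.swap (0 : Fin (m+3)) 1) t) := by
  have h3v : ((3 : Fin (m + 3)) : ℕ) = 3 := by
    rw [Fin.coe_ofNat_eq_mod]; exact Nat.mod_eq_of_lt (by omega)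
  funext t; congr 1
  try simp only [Equiv.Perm.mul_apply, Equiv.Perm.one_apply]
  by_cases c0 : t = 0
  · subst c0; simp [Equiv.swap_apply_def, cyc3, Fin.ext_iff, h3v, Nat.mod_eq_of_lt (show 2 < m + 3 by omega), Nat.mod_eq_of_lt (show 3 < m + 3 by omega)]
  by_cases c1 : t = 1
  · subst c1; simp [Equiv.swap_apply_def, cyc3, Fin.ext_iff, h3v, Nat.mod_eq_of_lt (show 2 < m + 3 by omega), Nat.mod_eq_of_lt (show 3 < m + 3 by omega)]
  by_cases c2 : t = 2
  · subst c2; simp [Equiv.swap_apply_def, cyc3, Fin.ext_iff, h3v, Nat.mod_eq_of_lt (show 2 < m + 3 by omega), Nat.mod_eq_of_lt (show 3 < m + 3 by omega)]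
  by_cases c3 : t = 3
  · subst c3; simp [Equiv.swap_apply_def, cyc3, Fin.ext_iff, h3v, Nat.mod_eq_of_lt (show 2 < m + 3 by omega), Nat.mod_eq_of_lt (show 3 < m + 3 by omega)]
  · have w0 := c0; have w1 := c1; have w2 := c2; have w3 := c3
    simp only [Fin.ext_iff, Fin.val_zero, Fin.val_one, Fin.val_two, h3v] at w0 w1 w2 w3
    simp [Equiv.swap_apply_def, cyc3, c0, c1, c2, c3, w0, w1, w2, w3, Nat.mod_eq_of_lt (show 2 < m + 3 by omega), Nat.mod_eq_of_lt (show 3 < m + 3 by omega)]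

set_option maxHeartbeats 1000000 in
private lemma F8 (m : ℕ) (hm : 1 ≤ m) (v : Fin (m+3) → V) :
    (fun t => v (cyc3 m (cyc3 m t))) = fun t => v ((Equiv.swap (0 : Fin (m+3)) 1 * Equiv.swap (0 : Fin (m+3)) 2) t) := by
  have h3v : ((3 : Fin (m + 3)) : ℕ) = 3 := by
    rw [Fin.coe_ofNat_eq_mod]; exact Nat.mod_eq_of_lt (by omega)
  funext t; congr 1
  try simp only [Equiv.Perm.mul_apply, Equiv.Perm.one_apply]
  by_cases c0 : t = 0
  · subst c0; simp [Equiv.swap_apply_def, cyc3, Fin.ext_iff, h3v, Nat.mod_eq_of_lt (show 2 < m + 3 by omega), Nat.mod_eq_of_lt (show 3 < m + 3 by omega)]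
  by_cases c1 : t = 1
  · subst c1; simp [Equiv.swap_apply_def, cyc3, Fin.ext_iff, h3v, Nat.mod_eq_of_lt (show 2 < m + 3 by omega), Nat.mod_eq_of_lt (show 3 < m + 3 by omega)]
  by_cases c2 : t = 2
  · subst c2; simp [Equiv.swap_apply_def, cyc3, Fin.ext_iff, h3v, Nat.mod_eq_of_lt (show 2 < m + 3 by omega), Nat.mod_eq_of_lt (show 3 < m + 3 by omega)]
  by_cases c3 : t = 3
  · subst c3; simp [Equiv.swap_apply_def, cyc3, Fin.ext_iff, h3v, Nat.mod_eq_of_lt (show 2 < m + 3 by omega), Nat.mod_eq_of_lt (show 3 < m + 3 by omega)]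
  · have w0 := c0; have w1 := c1; have w2 := c2; have w3 := c3
    simp only [Fin.ext_iff, Fin.val_zero, Fin.val_one, Fin.val_two, h3v] at w0 w1 w2 w3
    simp [Equiv.swap_apply_def, cyc3, c0, c1, c2, c3, w0, w1, w2, w3, Nat.mod_eq_of_lt (show 2 < m + 3 by omega), Nat.mod_eq_of_lt (show 3 < m + 3 by omega)]

set_option maxHeartbeats 1000000 in
private lemma F9 (m : ℕ) (hm : 1 ≤ m) (v : Fin (m+3) → V) :
    (fun t => v ((Equiv.swap (0 : Fin (m+3)) 1 * Equiv.swap (0 : Fin (m+3)) 2) ((Equiv.swap (1 : Fin (m+3)) 2) t))) = fun t => v ((Equiv.swap (0 : Fin (m+3)) 2) t) := by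
  have h3v : ((3 : Fin (m + 3)) : ℕ) = 3 := by
    rw [Fin.coe_ofNat_eq_mod]; exact Nat.mod_eq_of_lt (by omega)
  funext t; congr 1
  try simp only [Equiv.Perm.mul_apply, Equiv.Perm.one_apply]
  by_cases c0 : t = 0
  · subst c0; simp [Equiv.swap_apply_def, cyc3, Fin.ext_iff, h3v, Nat.mod_eq_of_lt (show 2 < m + 3 by omega), Nat.mod_eq_of_lt (show 3 < m + 3 by omega)]
  by_cases c1 : t = 1
  · subst c1; simp [Equiv.swap_apply_def, cyc3, Fin.ext_iff, h3v, Nat.mod_eq_of_lt (show 2 < m + 3 by omega), Nat.mod_eq_of_lt (show 3 < m + 3 by omega)]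
  by_cases c2 : t = 2
  · subst c2; simp [Equiv.swap_apply_def, cyc3, Fin.ext_iff, h3v, Nat.mod_eq_of_lt (show 2 < m + 3 by omega), Nat.mod_eq_of_lt (show 3 < m + 3 by omega)]
  by_cases c3 : t = 3
  · subst c3; simp [Equiv.swap_apply_def, cyc3, Fin.ext_iff, h3v, Nat.mod_eq_of_lt (show 2 < m + 3 by omega), Nat.mod_eq_of_lt (show 3 < m + 3 by omega)]
  · have w0 := c0; have w1 := c1; have w2 := c2; have w3 := c3
    simp only [Fin.ext_iff, Fin.val_zero, Fin.val_one, Fin.val_two, h3v] at w0 w1 w2 w3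
    simp [Equiv.swap_apply_def, cyc3, c0, c1, c2, c3, w0, w1, w2, w3, Nat.mod_eq_of_lt (show 2 < m + 3 by omega), Nat.mod_eq_of_lt (show 3 < m + 3 by omega)]

set_option maxHeartbeats 1000000 in
private lemma F10 (m : ℕ) (hm : 1 ≤ m) (v : Fin (m+3) → V) :
    (fun t => v ((Equiv.swap (0 : Fin (m+3)) 1 * Equiv.swap (0 : Fin (m+3)) 2 * Equiv.swap (2 : Fin (m+3)) 3) ((Equiv.swap (1 : Fin (m+3)) 2) t))) = fun t => v ((Equiv.swap (0 : Fin (m+3)) 2 * Equiv.swap (1 : Fin (m+3)) 3) t) := by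
  have h3v : ((3 : Fin (m + 3)) : ℕ) = 3 := by
    rw [Fin.coe_ofNat_eq_mod]; exact Nat.mod_eq_of_lt (by omega)
  funext t; congr 1
  try simp only [Equiv.Perm.mul_apply, Equiv.Perm.one_apply]
  by_cases c0 : t = 0
  · subst c0; simp [Equiv.swap_apply_def, cyc3, Fin.ext_iff, h3v, Nat.mod_eq_of_lt (show 2 < m + 3 by omega), Nat.mod_eq_of_lt (show 3 < m + 3 by omega)]
  by_cases c1 : t = 1
  · subst c1; simp [Equiv.swap_apply_def, cyc3, Fin.ext_iff, h3v, Nat.mod_eq_of_lt (show 2 < m + 3 by omega), Nat.mod_eq_of_lt (show 3 < m + 3 by omega)]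
  by_cases c2 : t = 2
  · subst c2; simp [Equiv.swap_apply_def, cyc3, Fin.ext_iff, h3v, Nat.mod_eq_of_lt (show 2 < m + 3 by omega), Nat.mod_eq_of_lt (show 3 < m + 3 by omega)]
  by_cases c3 : t = 3
  · subst c3; simp [Equiv.swap_apply_def, cyc3, Fin.ext_iff, h3v, Nat.mod_eq_of_lt (show 2 < m + 3 by omega), Nat.mod_eq_of_lt (show 3 < m + 3 by omega)]
  · have w0 := c0; have w1 := c1; have w2 := c2; have w3 := c3
    simp only [Fin.ext_iff, Fin.val_zero, Fin.val_one, Fin.val_two, h3v] at w0 w1 w2 w3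
    simp [Equiv.swap_apply_def, cyc3, c0, c1, c2, c3, w0, w1, w2, w3, Nat.mod_eq_of_lt (show 2 < m + 3 by omega), Nat.mod_eq_of_lt (show 3 < m + 3 by omega)]

set_option maxHeartbeats 1000000 in
private lemma F11 (m : ℕ) (hm : 1 ≤ m) (v : Fin (m+3) → V) :
    (fun t => v ((Equiv.swap (0 : Fin (m+3)) 2 * Equiv.swap (2 : Fin (m+3)) 3) ((Equiv.swap (1 : Fin (m+3)) 2) t))) = fun t => v ((Equiv.swap (0 : Fin (m+3)) 1 * Equiv.swap (0 : Fin (m+3)) 2 * Equiv.swap (1 : Fin (m+3)) 3) t) := by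
  have h3v : ((3 : Fin (m + 3)) : ℕ) = 3 := by
    rw [Fin.coe_ofNat_eq_mod]; exact Nat.mod_eq_of_lt (by omega)
  funext t; congr 1
  try simp only [Equiv.Perm.mul_apply, Equiv.Perm.one_apply]
  by_cases c0 : t = 0
  · subst c0; simp [Equiv.swap_apply_def, cyc3, Fin.ext_iff, h3v, Nat.mod_eq_of_lt (show 2 < m + 3 by omega), Nat.mod_eq_of_lt (show 3 < m + 3 by omega)]
  by_cases c1 : t = 1
  · subst c1; simp [Equiv.swap_apply_def, cyc3, Fin.ext_iff, h3v, Nat.mod_eq_of_lt (show 2 < m + 3 by omega), Nat.mod_eq_of_lt (show 3 < m + 3 by omega)]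
  by_cases c2 : t = 2
  · subst c2; simp [Equiv.swap_apply_def, cyc3, Fin.ext_iff, h3v, Nat.mod_eq_of_lt (show 2 < m + 3 by omega), Nat.mod_eq_of_lt (show 3 < m + 3 by omega)]
  by_cases c3 : t = 3
  · subst c3; simp [Equiv.swap_apply_def, cyc3, Fin.ext_iff, h3v, Nat.mod_eq_of_lt (show 2 < m + 3 by omega), Nat.mod_eq_of_lt (show 3 < m + 3 by omega)]
  · have w0 := c0; have w1 := c1; have w2 := c2; have w3 := c3
    simp only [Fin.ext_iff, Fin.val_zero, Fin.val_one, Fin.val_two, h3v] at w0 w1 w2 w3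
    simp [Equiv.swap_apply_def, cyc3, c0, c1, c2, c3, w0, w1, w2, w3, Nat.mod_eq_of_lt (show 2 < m + 3 by omega), Nat.mod_eq_of_lt (show 3 < m + 3 by omega)]

set_option maxHeartbeats 1000000 in
private lemma F12 (m : ℕ) (hm : 1 ≤ m) (v : Fin (m+3) → V) :
    (fun t => v ((Equiv.swap (0 : Fin (m+3)) 2 * Equiv.swap (1 : Fin (m+3)) 3) ((Equiv.swap (2 : Fin (m+3)) 3) ((Equiv.swap (1 : Fin (m+3)) 2) t)))) = fun t => v ((Equiv.swap (0 : Fin (m+3)) 2 * Equiv.swap (2 : Fin (m+3)) 3) t) := by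
  have h3v : ((3 : Fin (m + 3)) : ℕ) = 3 := by
    rw [Fin.coe_ofNat_eq_mod]; exact Nat.mod_eq_of_lt (by omega)
  funext t; congr 1
  try simp only [Equiv.Perm.mul_apply, Equiv.Perm.one_apply]
  by_cases c0 : t = 0
  · subst c0; simp [Equiv.swap_apply_def, cyc3, Fin.ext_iff, h3v, Nat.mod_eq_of_lt (show 2 < m + 3 by omega), Nat.mod_eq_of_lt (show 3 < m + 3 by omega)]
  by_cases c1 : t = 1
  · subst c1; simp [Equiv.swap_apply_def, cyc3, Fin.ext_iff, h3v, Nat.mod_eq_of_lt (show 2 < m + 3 by omega), Nat.mod_eq_of_lt (show 3 < m + 3 by omega)]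
  by_cases c2 : t = 2
  · subst c2; simp [Equiv.swap_apply_def, cyc3, Fin.ext_iff, h3v, Nat.mod_eq_of_lt (show 2 < m + 3 by omega), Nat.mod_eq_of_lt (show 3 < m + 3 by omega)]
  by_cases c3 : t = 3
  · subst c3; simp [Equiv.swap_apply_def, cyc3, Fin.ext_iff, h3v, Nat.mod_eq_of_lt (show 2 < m + 3 by omega), Nat.mod_eq_of_lt (show 3 < m + 3 by omega)]
  · have w0 := c0; have w1 := c1; have w2 := c2; have w3 := c3
    simp only [Fin.ext_iff, Fin.val_zero, Fin.val_one, Fin.val_two, h3v] at w0 w1 w2 w3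
    simp [Equiv.swap_apply_def, cyc3, c0, c1, c2, c3, w0, w1, w2, w3, Nat.mod_eq_of_lt (show 2 < m + 3 by omega), Nat.mod_eq_of_lt (show 3 < m + 3 by omega)]

set_option maxHeartbeats 1000000 in
private lemma F13 (m : ℕ) (hm : 1 ≤ m) (v : Fin (m+3) → V) :
    (fun t => v ((Equiv.swap (0 : Fin (m+3)) 2 * Equiv.swap (1 : Fin (m+3)) 3) ((Equiv.swap (2 : Fin (m+3)) 3) (cyc3 m t)))) = fun t => v ((Equiv.swap (0 : Fin (m+3)) 3) t) := by
  have h3v : ((3 : Fin (m + 3)) : ℕ) = 3 := by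
    rw [Fin.coe_ofNat_eq_mod]; exact Nat.mod_eq_of_lt (by omega)
  funext t; congr 1
  try simp only [Equiv.Perm.mul_apply, Equiv.Perm.one_apply]
  by_cases c0 : t = 0
  · subst c0; simp [Equiv.swap_apply_def, cyc3, Fin.ext_iff, h3v, Nat.mod_eq_of_lt (show 2 < m + 3 by omega), Nat.mod_eq_of_lt (show 3 < m + 3 by omega)]
  by_cases c1 : t = 1
  · subst c1; simp [Equiv.swap_apply_def, cyc3, Fin.ext_iff, h3v, Nat.mod_eq_of_lt (show 2 < m + 3 by omega), Nat.mod_eq_of_lt (show 3 < m + 3 by omega)]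
  by_cases c2 : t = 2
  · subst c2; simp [Equiv.swap_apply_def, cyc3, Fin.ext_iff, h3v, Nat.mod_eq_of_lt (show 2 < m + 3 by omega), Nat.mod_eq_of_lt (show 3 < m + 3 by omega)]
  by_cases c3 : t = 3
  · subst c3; simp [Equiv.swap_apply_def, cyc3, Fin.ext_iff, h3v, Nat.mod_eq_of_lt (show 2 < m + 3 by omega), Nat.mod_eq_of_lt (show 3 < m + 3 by omega)]
  · have w0 := c0; have w1 := c1; have w2 := c2; have w3 := c3
    simp only [Fin.ext_iff, Fin.val_zero, Fin.val_one, Fin.val_two, h3v] at w0 w1 w2 w3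
    simp [Equiv.swap_apply_def, cyc3, c0, c1, c2, c3, w0, w1, w2, w3, Nat.mod_eq_of_lt (show 2 < m + 3 by omega), Nat.mod_eq_of_lt (show 3 < m + 3 by omega)]

set_option maxHeartbeats 1000000 in
private lemma F14 (m : ℕ) (hm : 1 ≤ m) (v : Fin (m+3) → V) :
    (fun t => v ((Equiv.swap (0 : Fin (m+3)) 2 * Equiv.swap (1 : Fin (m+3)) 3) ((Equiv.swap (1 : Fin (m+3)) 2) t))) = fun t => v ((Equiv.swap (0 : Fin (m+3)) 1 * Equiv.swap (0 : Fin (m+3)) 2 * Equiv.swap (2 : Fin (m+3)) 3) t) := by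
  have h3v : ((3 : Fin (m + 3)) : ℕ) = 3 := by
    rw [Fin.coe_ofNat_eq_mod]; exact Nat.mod_eq_of_lt (by omega)
  funext t; congr 1
  try simp only [Equiv.Perm.mul_apply, Equiv.Perm.one_apply]
  by_cases c0 : t = 0
  · subst c0; simp [Equiv.swap_apply_def, cyc3, Fin.ext_iff, h3v, Nat.mod_eq_of_lt (show 2 < m + 3 by omega), Nat.mod_eq_of_lt (show 3 < m + 3 by omega)]
  by_cases c1 : t = 1
  · subst c1; simp [Equiv.swap_apply_def, cyc3, Fin.ext_iff, h3v, Nat.mod_eq_of_lt (show 2 < m + 3 by omega), Nat.mod_eq_of_lt (show 3 < m + 3 by omega)]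
  by_cases c2 : t = 2
  · subst c2; simp [Equiv.swap_apply_def, cyc3, Fin.ext_iff, h3v, Nat.mod_eq_of_lt (show 2 < m + 3 by omega), Nat.mod_eq_of_lt (show 3 < m + 3 by omega)]
  by_cases c3 : t = 3
  · subst c3; simp [Equiv.swap_apply_def, cyc3, Fin.ext_iff, h3v, Nat.mod_eq_of_lt (show 2 < m + 3 by omega), Nat.mod_eq_of_lt (show 3 < m + 3 by omega)]
  · have w0 := c0; have w1 := c1; have w2 := c2; have w3 := c3
    simp only [Fin.ext_iff, Fin.val_zero, Fin.val_one, Fin.val_two, h3v] at w0 w1 w2 w3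
    simp [Equiv.swap_apply_def, cyc3, c0, c1, c2, c3, w0, w1, w2, w3, Nat.mod_eq_of_lt (show 2 < m + 3 by omega), Nat.mod_eq_of_lt (show 3 < m + 3 by omega)]

set_option maxHeartbeats 1000000 in
private lemma F15 (m : ℕ) (hm : 1 ≤ m) (v : Fin (m+3) → V) :
    (fun t => v ((Equiv.swap (0 : Fin (m+3)) 2 * Equiv.swap (1 : Fin (m+3)) 3) (cyc3 m t))) = fun t => v ((Equiv.swap (0 : Fin (m+3)) 3 * Equiv.swap (1 : Fin (m+3)) 3) t) := by
  have h3v : ((3 : Fin (m + 3)) : ℕ) = 3 := by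
    rw [Fin.coe_ofNat_eq_mod]; exact Nat.mod_eq_of_lt (by omega)
  funext t; congr 1
  try simp only [Equiv.Perm.mul_apply, Equiv.Perm.one_apply]
  by_cases c0 : t = 0
  · subst c0; simp [Equiv.swap_apply_def, cyc3, Fin.ext_iff, h3v, Nat.mod_eq_of_lt (show 2 < m + 3 by omega), Nat.mod_eq_of_lt (show 3 < m + 3 by omega)]
  by_cases c1 : t = 1
  · subst c1; simp [Equiv.swap_apply_def, cyc3, Fin.ext_iff, h3v, Nat.mod_eq_of_lt (show 2 < m + 3 by omega), Nat.mod_eq_of_lt (show 3 < m + 3 by omega)]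
  by_cases c2 : t = 2
  · subst c2; simp [Equiv.swap_apply_def, cyc3, Fin.ext_iff, h3v, Nat.mod_eq_of_lt (show 2 < m + 3 by omega), Nat.mod_eq_of_lt (show 3 < m + 3 by omega)]
  by_cases c3 : t = 3
  · subst c3; simp [Equiv.swap_apply_def, cyc3, Fin.ext_iff, h3v, Nat.mod_eq_of_lt (show 2 < m + 3 by omega), Nat.mod_eq_of_lt (show 3 < m + 3 by omega)]
  · have w0 := c0; have w1 := c1; have w2 := c2; have w3 := c3
    simp only [Fin.ext_iff, Fin.val_zero, Fin.val_one, Fin.val_two, h3v] at w0 w1 w2 w3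
    simp [Equiv.swap_apply_def, cyc3, c0, c1, c2, c3, w0, w1, w2, w3, Nat.mod_eq_of_lt (show 2 < m + 3 by omega), Nat.mod_eq_of_lt (show 3 < m + 3 by omega)]
set_option maxHeartbeats 1000000 in
private lemma core013 (m : ℕ) (hm : 1 ≤ m)
    (T : MultilinearMap ℝ (fun _ : Fin (m + 3) => V) ℝ) (hT : IsNormal m T)
    (v : Fin (m + 3) → V) :
    ∑ σ ∈ Finset.univ.filter
        (fun σ : Equiv.Perm (Fin (m + 3)) =>
          ∀ t : Fin (m + 3), t ≠ 0 → t ≠ 1 → t ≠ 3 → σ t = t),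
      ((Equiv.Perm.sign σ : ℤ) : ℝ) * T (fun t => v (σ t)) = 0 := by
  have h3v : ((3 : Fin (m + 3)) : ℕ) = 3 := by
    rw [Fin.coe_ofNat_eq_mod]; exact Nat.mod_eq_of_lt (by omega)
  have n01 : (0 : Fin (m + 3)) ≠ 1 := by simp [Fin.ext_iff]
  have n03 : (0 : Fin (m + 3)) ≠ 3 := by simp [Fin.ext_iff, h3v, Nat.mod_eq_of_lt (show 3 < m + 3 by omega)]
  have n13 : (1 : Fin (m + 3)) ≠ 3 := by simp [Fin.ext_iff, h3v, Nat.mod_eq_of_lt (show 3 < m + 3 by omega)]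
  have hA := hT.1
  have hB := hT.2.2.2 hm
  have i1 : T (fun t => v (Equiv.swap (1 : Fin (m+3)) 3 t))
        - T (fun t => v ((Equiv.swap (0 : Fin (m+3)) 2 * Equiv.swap (1 : Fin (m+3)) 3) t))
      = T (fun t => v ((1 : Equiv.Perm (Fin (m+3))) t))
        - T (fun t => v (Equiv.swap (0 : Fin (m+3)) 2 t)) := by
    have h := hB (fun s => v (Equiv.swap (1 : Fin (m+3)) 2 s))
    rw [F1 m hm v, F2 m hm v, F3 m hm v, F4 m hm v] at h
    exact h
  have i2 : T (fun t => v ((Equiv.swap (0 : Fin (m+3)) 1 * Equiv.swap (1 : Fin (m+3)) 3) t))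
        - T (fun t => v ((Equiv.swap (0 : Fin (m+3)) 1 * Equiv.swap (0 : Fin (m+3)) 2
            * Equiv.swap (1 : Fin (m+3)) 3) t))
      = T (fun t => v (Equiv.swap (0 : Fin (m+3)) 1 t))
        - T (fun t => v ((Equiv.swap (0 : Fin (m+3)) 1 * Equiv.swap (0 : Fin (m+3)) 2) t)) := by
    have h := hB (fun s => v (cyc3 m s))
    rw [F5 m hm v, F6 m hm v, F7 m hm v, F8 m hm v] at h
    exact h
  have i3 : T (fun t => v (Equiv.swap (0 : Fin (m+3)) 2 t))
      = T (fun t => v ((Equiv.swap (0 : Fin (m+3)) 1 * Equiv.swap (0 : Fin (m+3)) 2) t)) := by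
    have h := hA (fun s => v ((Equiv.swap (0 : Fin (m+3)) 1 * Equiv.swap (0 : Fin (m+3)) 2) s))
    rw [F9 m hm v] at h
    exact h
  have i4 : T (fun t => v ((Equiv.swap (0 : Fin (m+3)) 2 * Equiv.swap (1 : Fin (m+3)) 3) t))
      = T (fun t => v ((Equiv.swap (0 : Fin (m+3)) 1 * Equiv.swap (0 : Fin (m+3)) 2
          * Equiv.swap (2 : Fin (m+3)) 3) t)) := by
    have h := hA (fun s => v ((Equiv.swap (0 : Fin (m+3)) 1 * Equiv.swap (0 : Fin (m+3)) 2
      * Equiv.swap (2 : Fin (m+3)) 3) s))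
    rw [F10 m hm v] at h
    exact h
  have i5 : T (fun t => v ((Equiv.swap (0 : Fin (m+3)) 1 * Equiv.swap (0 : Fin (m+3)) 2
        * Equiv.swap (1 : Fin (m+3)) 3) t))
      = T (fun t => v ((Equiv.swap (0 : Fin (m+3)) 2 * Equiv.swap (2 : Fin (m+3)) 3) t)) := by
    have h := hA (fun s => v ((Equiv.swap (0 : Fin (m+3)) 2 * Equiv.swap (2 : Fin (m+3)) 3) s))
    rw [F11 m hm v] at h
    exact h
  have i6 : T (fun t => v ((Equiv.swap (0 : Fin (m+3)) 2 * Equiv.swap (2 : Fin (m+3)) 3) t))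
        - T (fun t => v (Equiv.swap (0 : Fin (m+3)) 3 t))
      = T (fun t => v ((Equiv.swap (0 : Fin (m+3)) 1 * Equiv.swap (0 : Fin (m+3)) 2
          * Equiv.swap (2 : Fin (m+3)) 3) t))
        - T (fun t => v ((Equiv.swap (0 : Fin (m+3)) 3 * Equiv.swap (1 : Fin (m+3)) 3) t)) := by
    have h := hB (fun s => v ((Equiv.swap (0 : Fin (m+3)) 2 * Equiv.swap (1 : Fin (m+3)) 3) s))
    rw [F12 m hm v, F13 m hm v, F14 m hm v, F15 m hm v] at h
    exact h
  rw [alt_expand (0 : Fin (m+3)) 1 3 n01 n03 n13]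
  have s1 : ((Equiv.Perm.sign (1 : Equiv.Perm (Fin (m+3))) : ℤ) : ℝ) = 1 := by simp
  have s2 : ((Equiv.Perm.sign (Equiv.swap (0 : Fin (m+3)) 1) : ℤ) : ℝ) = -1 := by
    rw [Equiv.Perm.sign_swap n01]; simp
  have s3 : ((Equiv.Perm.sign (Equiv.swap (0 : Fin (m+3)) 3) : ℤ) : ℝ) = -1 := by
    rw [Equiv.Perm.sign_swap n03]; simp
  have s4 : ((Equiv.Perm.sign (Equiv.swap (1 : Fin (m+3)) 3) : ℤ) : ℝ) = -1 := by
    rw [Equiv.Perm.sign_swap n13]; simp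
  have s5 : ((Equiv.Perm.sign (Equiv.swap (0 : Fin (m+3)) 1 * Equiv.swap (1 : Fin (m+3)) 3)
      : ℤ) : ℝ) = 1 := by
    rw [Equiv.Perm.sign_mul, Equiv.Perm.sign_swap n01, Equiv.Perm.sign_swap n13]; simp
  have s6 : ((Equiv.Perm.sign (Equiv.swap (0 : Fin (m+3)) 3 * Equiv.swap (1 : Fin (m+3)) 3)
      : ℤ) : ℝ) = 1 := by
    rw [Equiv.Perm.sign_mul, Equiv.Perm.sign_swap n03, Equiv.Perm.sign_swap n13]; simp
  rw [s1, s2, s3, s4, s5, s6]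
  linarith [i1, i2, i3, i4, i5, i6]

private lemma hard0ek (m : ℕ)
    (T : MultilinearMap ℝ (fun _ : Fin (m + 3) => V) ℝ) (hT : IsNormal m T)
    (e k : Fin (m + 3)) (he : e = 1 ∨ e = 2) (hk : 3 ≤ (k : ℕ)) (v : Fin (m + 3) → V) :
    ∑ σ ∈ Finset.univ.filter
        (fun σ : Equiv.Perm (Fin (m + 3)) =>
          ∀ t : Fin (m + 3), t ≠ 0 → t ≠ e → t ≠ k → σ t = t),
      ((Equiv.Perm.sign σ : ℤ) : ℝ) * T (fun t => v (σ t)) = 0 := by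
  have hm : 1 ≤ m := by have := k.isLt; omega
  have h3v : ((3 : Fin (m + 3)) : ℕ) = 3 := by
    rw [Fin.coe_ofNat_eq_mod]; exact Nat.mod_eq_of_lt (by omega)
  have k0 : (0 : Fin (m + 3)) ≠ k := Fin.ne_of_val_ne (by simp only [Fin.val_zero]; omega)
  have k1 : (1 : Fin (m + 3)) ≠ k := Fin.ne_of_val_ne (by simp only [Fin.val_one]; omega)
  have k2 : (2 : Fin (m + 3)) ≠ k := Fin.ne_of_val_ne (by simp only [Fin.val_two]; omega)
  have n03 : (0 : Fin (m + 3)) ≠ 3 :=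
    Fin.ne_of_val_ne (by simp only [Fin.val_zero, h3v]; omega)
  have n13 : (1 : Fin (m + 3)) ≠ 3 :=
    Fin.ne_of_val_ne (by simp only [Fin.val_one, h3v]; omega)
  have n23 : (2 : Fin (m + 3)) ≠ 3 :=
    Fin.ne_of_val_ne (by simp only [Fin.val_two, h3v]; omega)
  have hstep : ∀ w : Fin (m + 3) → V,
      ∑ σ ∈ Finset.univ.filter
          (fun σ : Equiv.Perm (Fin (m + 3)) =>
            ∀ t : Fin (m + 3), t ≠ 0 → t ≠ 1 → t ≠ k → σ t = t),
        ((Equiv.Perm.sign σ : ℤ) : ℝ) * T (fun t => w (σ t)) = 0 := by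
    intro w
    have hτ : ∀ u : Fin (m + 3) → V,
        T (fun t => u (Equiv.swap (3 : Fin (m + 3)) k t)) = T u := by
      intro u
      exact hT.2.1 u (Equiv.swap 3 k)
        (Equiv.swap_apply_of_ne_of_ne n03 k0)
        (Equiv.swap_apply_of_ne_of_ne n13 k1)
        (Equiv.swap_apply_of_ne_of_ne n23 k2)
    rw [alt_conj T 0 1 k 0 1 3 (Equiv.swap 3 k)
      (Equiv.swap_apply_of_ne_of_ne n03 k0)
      (Equiv.swap_apply_of_ne_of_ne n13 k1)
      (Equiv.swap_apply_left 3 k)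
      hτ w]
    exact core013 m hm T hT (fun s => w (Equiv.swap (3 : Fin (m + 3)) k s))
  rcases he with rfl | rfl
  · exact hstep v
  · have n01 : (0 : Fin (m + 3)) ≠ 1 := Fin.ne_of_val_ne (by simp)
    have n02 : (0 : Fin (m + 3)) ≠ 2 := Fin.ne_of_val_ne (by simp [Nat.mod_eq_of_lt (show 2 < m + 3 by omega)])
    rw [alt_conj T 0 2 k 0 1 k (Equiv.swap 1 2)
      (Equiv.swap_apply_of_ne_of_ne n01 n02)
      (Equiv.swap_apply_left 1 2)
      (Equiv.swap_apply_of_ne_of_ne k1.symm k2.symm)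
      hT.1 v]
    exact hstep (fun s => v (Equiv.swap (1 : Fin (m + 3)) 2 s))

private lemma main_sorted (m : ℕ)
    (T : MultilinearMap ℝ (fun _ : Fin (m + 3) => V) ℝ) (hT : IsNormal m T)
    (a b c : Fin (m + 3)) (h1 : (a : ℕ) < (b : ℕ)) (h2 : (b : ℕ) < (c : ℕ))
    (v : Fin (m + 3) → V) :
    ∑ σ ∈ Finset.univ.filter
        (fun σ : Equiv.Perm (Fin (m + 3)) =>
          ∀ t : Fin (m + 3), t ≠ a → t ≠ b → t ≠ c → σ t = t),
      ((Equiv.Perm.sign σ : ℤ) : ℝ) * T (fun t => v (σ t)) = 0 := by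
  have hab : a ≠ b := Fin.ne_of_val_ne (by omega)
  have hac : a ≠ c := Fin.ne_of_val_ne (by omega)
  have hbc : b ≠ c := Fin.ne_of_val_ne (by omega)
  by_cases hb3 : 3 ≤ (b : ℕ)
  · -- positions b and c are both in the symmetric tail block
    apply alt_zero_of_pair T a b c hab hac hbc v
    intro w
    refine hT.2.1 w (Equiv.swap b c) ?_ ?_ ?_ <;>
      exact Equiv.swap_apply_of_ne_of_ne
        (Fin.ne_of_val_ne (by simp only [Fin.val_zero, Fin.val_one, Fin.val_two]; omega))
        (Fin.ne_of_val_ne (by simp only [Fin.val_zero, Fin.val_one, Fin.val_two]; omega))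
  · by_cases ha0 : (a : ℕ) = 0
    · have ha : a = 0 := Fin.ext (by simp [ha0])
      subst ha
      by_cases hc3 : 3 ≤ (c : ℕ)
      · -- hard case 0, e ∈ {1,2}, k ≥ 3
        have he : b = 1 ∨ b = 2 := by
          have : (b : ℕ) = 1 ∨ (b : ℕ) = 2 := by
            simp only [Fin.val_zero] at h1; omega
          rcases this with h | h
          · exact Or.inl (Fin.ext (by simp [h]))
          · exact Or.inr (Fin.ext (by simp [h, Nat.mod_eq_of_lt (show 2 < m + 3 by omega)]))
        exact hard0ek m T hT b c he hc3 v
      · -- all three positions among {0,1,2}: b = 1, c = 2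
        have hb1 : b = 1 := Fin.ext (by simp only [Fin.val_one]; omega)
        have hc2 : c = 2 := Fin.ext (by simp only [Fin.val_two]; omega)
        subst hb1; subst hc2
        exact alt_zero_of_pair T 0 1 2 hab hac hbc v hT.1
    · -- a = 1, b = 2, c ≥ 3: positions 1 and 2 symmetric
      have ha1 : a = 1 := Fin.ext (by simp only [Fin.val_one]; omega)
      have hb2 : b = 2 := Fin.ext (by simp only [Fin.val_two]; omega)
      subst ha1; subst hb2
      rw [filter_reorder 1 2 c c 1 2 (by tauto)]
      exact alt_zero_of_pair T c 1 2 hac.symm hbc.symm hab v hT.1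

private theorem statement_4_aux (V : Type*) [AddCommGroup V] [Module ℝ V] [FiniteDimensional ℝ V]
    (m : ℕ) (T : MultilinearMap ℝ (fun _ : Fin (m + 3) => V) ℝ) (hT : IsNormal m T)
    (a b c : Fin (m + 3)) (hab : a ≠ b) (hac : a ≠ c) (hbc : b ≠ c)
    (v : Fin (m + 3) → V) :
    ∑ σ ∈ Finset.univ.filter
        (fun σ : Equiv.Perm (Fin (m + 3)) =>
          ∀ t : Fin (m + 3), t ≠ a → t ≠ b → t ≠ c → σ t = t),
      ((Equiv.Perm.sign σ : ℤ) : ℝ) * T (fun t => v (σ t)) = 0 := by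
  have vab : (a : ℕ) ≠ (b : ℕ) := fun h => hab (Fin.ext h)
  have vac : (a : ℕ) ≠ (c : ℕ) := fun h => hac (Fin.ext h)
  have vbc : (b : ℕ) ≠ (c : ℕ) := fun h => hbc (Fin.ext h)
  rcases Nat.lt_trichotomy (a : ℕ) (b : ℕ) with h1 | h1 | h1
  · rcases Nat.lt_trichotomy (b : ℕ) (c : ℕ) with h2 | h2 | h2
    · exact main_sorted m T hT a b c h1 h2 v
    · exact absurd h2 vbc
    · rcases Nat.lt_trichotomy (a : ℕ) (c : ℕ) with h3 | h3 | h3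
      · rw [filter_reorder a b c a c b (by tauto)]
        exact main_sorted m T hT a c b h3 h2 v
      · exact absurd h3 vac
      · rw [filter_reorder a b c c a b (by tauto)]
        exact main_sorted m T hT c a b h3 h1 v
  · exact absurd h1 vab
  · rcases Nat.lt_trichotomy (a : ℕ) (c : ℕ) with h2 | h2 | h2
    · rw [filter_reorder a b c b a c (by tauto)]
      exact main_sorted m T hT b a c h1 h2 v
    · exact absurd h2 vac
    · rcases Nat.lt_trichotomy (b : ℕ) (c : ℕ) with h3 | h3 | h3
      · rw [filter_reorder a b c b c a (by tauto)]
        exact main_sorted m T hT b c a h3 h2 v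
      · exact absurd h3 vbc
      · rw [filter_reorder a b c c b a (by tauto)]
        exact main_sorted m T hT c b a h3 h1 v

end AuxStatement4

/-- the alternation of a normal tensor of order m over any three distinct
argument positions vanishes. -/
theorem statement_4 (V : Type*) [AddCommGroup V] [Module ℝ V] [FiniteDimensional ℝ V]
    (m : ℕ) (T : MultilinearMap ℝ (fun _ : Fin (m + 3) => V) ℝ) (hT : IsNormal m T)
    (a b c : Fin (m + 3)) (hab : a ≠ b) (hac : a ≠ c) (hbc : b ≠ c)
    (v : Fin (m + 3) → V) :
    ∑ σ ∈ Finset.univ.filter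
        (fun σ : Equiv.Perm (Fin (m + 3)) =>
          ∀ t : Fin (m + 3), t ≠ a → t ≠ b → t ≠ c → σ t = t),
      ((Equiv.Perm.sign σ : ℤ) : ℝ) * T (fun t => v (σ t)) = 0 := by
  exact statement_4_aux V m T hT a b c hab hac hbc v
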